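/- The l∞ plane ℝ²_∞ is hyperconvex: for every collection (x_i)_{i∈I} of points of ℝ²_∞ and every collection (r_i)_{i∈I} of nonnegative real numbers satisfying d∞(x_i, x_j) ≤ r_i + r_j for all i, j ∈ I, the intersection ⋂_{i∈I} {x ∈ ℝ² : d∞(x_i, x) ≤ r_i} is nonempty. -/
import Mathlib

/-- 1D Helly: a family of intervals that pairwise intersect has a common point. -/
lemma linf_coord_aux {ι : Type} [Nonempty ι] (f : ι → ℝ) (r : ι → ℝ)
    (h : ∀ i j, |f i - f j| ≤ r i + r j) :
    ∃ c : ℝ, ∀ i, |f i - c| ≤ r i := by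
  obtain ⟨i₀⟩ := ‹Nonempty ι›
  have hbdd : BddAbove (Set.range fun i => f i - r i) := by
    refine ⟨f i₀ + r i₀, ?_⟩
    rintro _ ⟨j, rfl⟩
    simp only
    have := (abs_le.mp (h j i₀)).2
    linarith
  set c := ⨆ i, (f i - r i) with hc
  refine ⟨c, fun i => ?_⟩
  have h1 : f i - r i ≤ c := le_ciSup hbdd i
  have h2 : c ≤ f i + r i := by
    apply ciSup_le
    intro j
    have := (abs_le.mp (h j i)).2
    linarith
  rw [abs_le]
  constructor <;> linarith

/-- The `l∞` plane `ℝ²_∞` is hyperconvex: any family of closed balls with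
`d∞(x_i, x_j) ≤ r_i + r_j` for all `i, j` has nonempty intersection. -/
theorem linf_plane_hyperconvex (ι : Type) (x : ι → ℝ × ℝ) (r : ι → ℝ)
    (hr : ∀ i, 0 ≤ r i) (h : ∀ i j, dist (x i) (x j) ≤ r i + r j) :
    (⋂ i, {y : ℝ × ℝ | dist (x i) y ≤ r i}).Nonempty := by
  rcases isEmpty_or_nonempty ι with hι | hι
  · exact ⟨(0, 0), by simp⟩
  have hd : ∀ (p q : ℝ × ℝ), dist p q = max |p.1 - q.1| |p.2 - q.2| := by
    intro p q; rw [Prod.dist_eq, Real.dist_eq, Real.dist_eq]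
  have h1 : ∀ i j, |(x i).1 - (x j).1| ≤ r i + r j := fun i j =>
    le_trans (le_max_left _ _) ((hd _ _) ▸ h i j)
  have h2 : ∀ i j, |(x i).2 - (x j).2| ≤ r i + r j := fun i j =>
    le_trans (le_max_right _ _) ((hd _ _) ▸ h i j)
  obtain ⟨c₁, hc₁⟩ := linf_coord_aux (fun i => (x i).1) r h1
  obtain ⟨c₂, hc₂⟩ := linf_coord_aux (fun i => (x i).2) r h2
  refine ⟨(c₁, c₂), Set.mem_iInter.mpr fun i => ?_⟩
  simp only [Set.mem_setOf_eq, hd]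
  exact max_le (hc₁ i) (hc₂ i)
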